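/- Let J : ℝᵖ ⇉ ℝ^{m×p} be a set-valued map with closed graph, nonempty and locally bounded values, and suppose there exists a locally Lipschitz G : ℝᵖ → ℝᵐ such that for every absolutely continuous γ : [0,1] → ℝᵖ and almost every t ∈ [0,1], d/dt G(γ(t)) = M γ'(t) for all M ∈ J(γ(t)). Then for every absolutely continuous loop γ : [0,1] → ℝᵖ with γ(0) = γ(1) and every measurable selection V(t) ∈ J(γ(t)), the integral ∫₀¹ V(t) γ'(t) dt equals 0. -/

import Mathlib

open MeasureTheory Set

/-- Absolute continuity of a curve on `[0,1]`. -/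
def AbsCont {E : Type*} [NormedAddCommGroup E] [NormedSpace ℝ E] (γ : ℝ → E) : Prop :=
  (∀ᵐ t ∂(volume.restrict (Icc (0:ℝ) 1)), DifferentiableAt ℝ γ t) ∧
  IntegrableOn (deriv γ) (Icc (0:ℝ) 1) volume ∧
  ∀ t ∈ Icc (0:ℝ) 1, γ t - γ 0 = ∫ s in (0:ℝ)..t, deriv γ s

/-- Action of an `m × p` matrix (as `Fin m → Fin p → ℝ`) on a vector. -/
def mulv {m p : ℕ} (A : Fin m → Fin p → ℝ) (x : Fin p → ℝ) : Fin m → ℝ :=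
  fun i => ∑ j, A i j * x j

open intervalIntegral Filter Function in
/-- FTC-1 almost everywhere, for the primitive of an integrable function. -/
lemma ae_hasDerivAt_primitive {h : ℝ → ℝ} (hint : Integrable h volume) :
    ∀ᵐ x, HasDerivAt (fun t => ∫ s in (0:ℝ)..t, h s) (h x) x := by
  have hloc : LocallyIntegrable h volume := hint.locallyIntegrable
  filter_upwards [(IsUnifLocDoublingMeasure.vitaliFamily (volume : Measure ℝ) 1).ae_tendsto_average
    hloc] with x hx
  set m : ℝ → ℝ := fun t => ∫ s in (0:ℝ)..t, h s with hm
  have hslope_right : ∀ᶠ y in nhdsWithin x (Ioi x), slope m x y = ⨍ s in Icc x y, h s := by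
    filter_upwards [self_mem_nhdsWithin] with y (hy : x < y)
    have h1 : m y - m x = ∫ s in Icc x y, h s := by
      show (∫ s in (0:ℝ)..y, h s) - ∫ s in (0:ℝ)..x, h s = _
      rw [intervalIntegral.integral_interval_sub_left hint.intervalIntegrable
        hint.intervalIntegrable, intervalIntegral.integral_of_le hy.le,
        MeasureTheory.integral_Icc_eq_integral_Ioc]
    rw [slope_def_field, div_eq_inv_mul, setAverage_eq, h1, Real.volume_real_Icc_of_le hy.le,
      smul_eq_mul]
  have hslope_left : ∀ᶠ y in nhdsWithin x (Iio x), slope m x y = ⨍ s in Icc y x, h s := by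
    filter_upwards [self_mem_nhdsWithin] with y (hy : y < x)
    have h1 : m x - m y = ∫ s in Icc y x, h s := by
      show (∫ s in (0:ℝ)..x, h s) - ∫ s in (0:ℝ)..y, h s = _
      rw [intervalIntegral.integral_interval_sub_left hint.intervalIntegrable
        hint.intervalIntegrable, intervalIntegral.integral_of_le hy.le,
        MeasureTheory.integral_Icc_eq_integral_Ioc]
    have h2 : slope m x y = (m x - m y) / (x - y) := by
      rw [slope_def_field, ← neg_div_neg_eq]; ring_nf
    rw [h2, h1, div_eq_inv_mul, setAverage_eq, Real.volume_real_Icc_of_le hy.le,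
      smul_eq_mul]
  rw [hasDerivAt_iff_tendsto_slope, ← nhdsLT_sup_nhdsGT x, Filter.tendsto_sup]
  constructor
  · exact Filter.Tendsto.congr' (hslope_left.mono fun y e => e.symm)
      (hx.comp (Real.tendsto_Icc_vitaliFamily_left x))
  · exact Filter.Tendsto.congr' (hslope_right.mono fun y e => e.symm)
      (hx.comp (Real.tendsto_Icc_vitaliFamily_right x))

open Filter Function in
/-- For a continuous monotone function with a.e. derivative `d` on `(0,1)`,
`∫ d ≤ f 1 - f 0`. -/
lemma monotone_setIntegral_deriv_le {f d : ℝ → ℝ} (hf : Monotone f) (hc : Continuous f)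
    (hd : ∀ᵐ t ∂(volume.restrict (Ioo (0:ℝ) 1)), HasDerivAt f (d t) t) :
    ∫ t in Ioo (0:ℝ) 1, d t ≤ f 1 - f 0 := by
  set μ := hf.stieltjesFunction.measure with hμ
  have hrl : ∀ x : ℝ, hf.stieltjesFunction x = f x := by
    intro x
    rw [hf.stieltjesFunction_eq]
    exact rightLim_eq_of_tendsto
      ((hc.tendsto x).mono_left nhdsWithin_le_nhds)
  have hIoc : μ (Ioc (0:ℝ) 1) = ENNReal.ofReal (f 1 - f 0) := by
    rw [hμ, StieltjesFunction.measure_Ioc, hrl, hrl]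
  have hne : μ (Ioo (0:ℝ) 1) ≠ ⊤ := by
    refine ne_top_of_le_ne_top ?_ (measure_mono Ioo_subset_Ioc_self)
    rw [hIoc]; exact ENNReal.ofReal_ne_top
  have hae : ∀ᵐ t ∂(volume.restrict (Ioo (0:ℝ) 1)), d t = (μ.rnDeriv volume t).toReal := by
    filter_upwards [hd, ae_restrict_of_ae hf.ae_hasDerivAt] with t h1 h2
    exact h1.unique h2
  calc ∫ t in Ioo (0:ℝ) 1, d t = ∫ t in Ioo (0:ℝ) 1, (μ.rnDeriv volume t).toReal :=
        integral_congr_ae hae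
    _ ≤ (μ (Ioo (0:ℝ) 1)).toReal := Measure.setIntegral_toReal_rnDeriv_le hne
    _ ≤ (μ (Ioc (0:ℝ) 1)).toReal := by
        apply ENNReal.toReal_mono (by rw [hIoc]; exact ENNReal.ofReal_ne_top)
        exact measure_mono Ioo_subset_Ioc_self
    _ ≤ f 1 - f 0 := by
        rw [hIoc, ENNReal.toReal_ofReal (sub_nonneg.2 (hf (by norm_num : (0:ℝ) ≤ 1)))]

/-- A locally Lipschitz map is uniformly "Lipschitz at small scales" on a compact set. -/
lemma exists_lipschitz_on_compact {α β : Type*} [MetricSpace α] [MetricSpace β] {f : α → β}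
    (hf : LocallyLipschitz f) {K : Set α} (hK : IsCompact K) :
    ∃ L : ℝ, 0 ≤ L ∧ ∃ δ : ℝ, 0 < δ ∧
      ∀ x ∈ K, ∀ y ∈ K, dist x y < δ → dist (f x) (f y) ≤ L * dist x y := by
  have H : ∀ x : α, ∃ κ : NNReal, ∃ r : ℝ, 0 < r ∧ LipschitzOnWith κ f (Metric.ball x r) := by
    intro x
    obtain ⟨κ, t, ht, hl⟩ := hf x
    obtain ⟨r, hr, hb⟩ := Metric.mem_nhds_iff.1 ht
    exact ⟨κ, r, hr, hl.mono hb⟩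
  choose κ r hr hlip using H
  obtain ⟨s, hs⟩ := hK.elim_finite_subcover (fun x => Metric.ball x (r x))
    (fun x => Metric.isOpen_ball) (fun x _ => Set.mem_iUnion.2 ⟨x, Metric.mem_ball_self (hr x)⟩)
  obtain ⟨δ, hδ, hle⟩ := lebesgue_number_lemma_of_metric (ι := {x // x ∈ s}) hK
    (c := fun i => Metric.ball i.1 (r i.1)) (fun _ => Metric.isOpen_ball)
    (by
      intro x hx
      rcases Set.mem_iUnion₂.1 (hs hx) with ⟨y, hy, hmem⟩
      exact Set.mem_iUnion.2 ⟨⟨y, hy⟩, hmem⟩)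
  refine ⟨(s.sup κ : NNReal), (s.sup κ : NNReal).coe_nonneg, δ, hδ, ?_⟩
  intro x hx y hy hxy
  obtain ⟨i, hi⟩ := hle x hx
  have hxmem : x ∈ Metric.ball i.1 (r i.1) := hi (Metric.mem_ball_self hδ)
  have hymem : y ∈ Metric.ball i.1 (r i.1) := hi (by simpa [Metric.mem_ball, dist_comm] using hxy)
  calc dist (f x) (f y) ≤ (κ i.1 : ℝ) * dist x y := (hlip i.1).dist_le_mul x hxmem y hymem
    _ ≤ ((s.sup κ : NNReal) : ℝ) * dist x y := by
        have : (κ i.1 : ℝ) ≤ ((s.sup κ : NNReal) : ℝ) := by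
          exact_mod_cast Finset.le_sup i.2
        exact mul_le_mul_of_nonneg_right this dist_nonneg
theorem stmt5 (p m : ℕ) (J : (Fin p → ℝ) → Set (Fin m → Fin p → ℝ))
    (hclosed : IsClosed {q : (Fin p → ℝ) × (Fin m → Fin p → ℝ) | q.2 ∈ J q.1})
    (hne : ∀ x, (J x).Nonempty)
    (hlb : ∀ K : Set (Fin p → ℝ), IsCompact K →
      ∃ M : ℝ, ∀ x ∈ K, ∀ A ∈ J x, ∀ i j, |A i j| ≤ M)
    (G : (Fin p → ℝ) → (Fin m → ℝ)) (hG : LocallyLipschitz G)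
    (hchain : ∀ γ : ℝ → (Fin p → ℝ), AbsCont γ →
      ∀ᵐ t ∂(volume.restrict (Icc (0:ℝ) 1)), ∀ M ∈ J (γ t),
        HasDerivAt (fun s => G (γ s)) (mulv M (deriv γ t)) t)
    (γ : ℝ → (Fin p → ℝ)) (hγ : AbsCont γ) (hloop : γ 0 = γ 1)
    (V : ℝ → (Fin m → Fin p → ℝ)) (hVmeas : Measurable V)
    (hVsel : ∀ t ∈ Icc (0:ℝ) 1, V t ∈ J (γ t)) :
    (∫ t in (0:ℝ)..1, mulv (V t) (deriv γ t)) = 0 := by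
  obtain ⟨hdiff, hint, hrep⟩ := hγ
  -- interval integrability of deriv γ on subintervals of [0,1]
  have hII : ∀ a b : ℝ, a ∈ Icc (0:ℝ) 1 → b ∈ Icc (0:ℝ) 1 →
      IntervalIntegrable (deriv γ) volume a b := fun a b ha hb =>
    IntegrableOn.intervalIntegrable (hint.mono_set (uIcc_subset_Icc ha hb))
  -- increments of γ
  have hincr : ∀ s t : ℝ, s ∈ Icc (0:ℝ) 1 → t ∈ Icc (0:ℝ) 1 →
      γ t - γ s = ∫ u in s..t, deriv γ u := by
    intro s t hs ht
    have e : γ t - γ s = (γ t - γ 0) - (γ s - γ 0) := by abel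
    rw [e, hrep t ht, hrep s hs,
      intervalIntegral.integral_interval_sub_left (hII 0 t (by norm_num) ht)
        (hII 0 s (by norm_num) hs)]
  -- continuity of γ on [0,1]
  have hγcont : ContinuousOn γ (Icc (0:ℝ) 1) := by
    have h1 : ContinuousOn (fun t : ℝ => γ 0 + ∫ s in (0:ℝ)..t, deriv γ s) (Icc (0:ℝ) 1) := by
      apply continuousOn_const.add
      have := intervalIntegral.continuousOn_primitive_interval (a := 0) (b := 1) (μ := volume) (f := deriv γ)
        (by rwa [uIcc_of_le (by norm_num : (0:ℝ) ≤ 1)])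
      rwa [uIcc_of_le (by norm_num : (0:ℝ) ≤ 1)] at this
    refine ContinuousOn.congr h1 ?_
    intro t ht
    have h2 := hrep t ht
    show γ t = γ 0 + ∫ s in (0:ℝ)..t, deriv γ s
    rw [← h2]; abel
  -- compact image and bounds
  have hKcomp : IsCompact (γ '' Icc (0:ℝ) 1) := isCompact_Icc.image_of_continuousOn hγcont
  obtain ⟨M, hM⟩ := hlb (γ '' Icc (0:ℝ) 1) hKcomp
  set C : ℝ := max M 0 with hC
  have hC0 : 0 ≤ C := le_max_right _ _
  have hVb : ∀ t ∈ Icc (0:ℝ) 1, ∀ i j, |V t i j| ≤ C := fun t ht i j =>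
    (hM (γ t) (mem_image_of_mem γ ht) (V t) (hVsel t ht) i j).trans (le_max_left _ _)
  obtain ⟨L, hL0, δ, hδpos, hLip⟩ := exists_lipschitz_on_compact hG hKcomp
  -- uniform continuity of γ
  obtain ⟨η, hηpos, hη⟩ := (Metric.uniformContinuousOn_iff.1
    (isCompact_Icc.uniformContinuousOn_of_continuous hγcont)) δ hδpos
  -- the dominating function
  set Cst : ℝ := L + C * p + 1 with hCst
  have hCst0 : 0 ≤ Cst := by positivity
  set h : ℝ → ℝ := fun u => Cst * ‖deriv γ u‖ with hh
  have hhnonneg : ∀ u, 0 ≤ h u := fun u => by positivity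
  have hnormIcc : IntegrableOn (fun u => ‖deriv γ u‖) (Icc (0:ℝ) 1) volume := hint.norm
  have hhIcc : IntegrableOn h (Icc (0:ℝ) 1) volume := hnormIcc.const_mul Cst
  have hhII : ∀ a b : ℝ, a ∈ Icc (0:ℝ) 1 → b ∈ Icc (0:ℝ) 1 →
      IntervalIntegrable h volume a b := fun a b ha hb =>
    IntegrableOn.intervalIntegrable (hhIcc.mono_set (uIcc_subset_Icc ha hb))
  set hind : ℝ → ℝ := indicator (Icc (0:ℝ) 1) h with hhind
  have hindint : Integrable hind volume := hhIcc.integrable_indicator measurableSet_Icc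
  have hindnonneg : ∀ u, 0 ≤ hind u := fun u => by
    rw [hhind]; exact indicator_nonneg (fun x _ => hhnonneg x) u
  -- norm of increments of γ
  have hγnorm : ∀ s t : ℝ, s ∈ Icc (0:ℝ) 1 → t ∈ Icc (0:ℝ) 1 → s ≤ t →
      ‖γ t - γ s‖ ≤ ∫ u in s..t, ‖deriv γ u‖ := by
    intro s t hs ht hst
    rw [hincr s t hs ht]
    exact intervalIntegral.norm_integral_le_integral_norm hst
  -- modulus at small scale
  have hsmall : ∀ s t : ℝ, s ∈ Icc (0:ℝ) 1 → t ∈ Icc (0:ℝ) 1 → s ≤ t → t - s < η →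
      ‖G (γ t) - G (γ s)‖ ≤ ∫ u in s..t, h u := by
    intro s t hs ht hst hlt
    have hd : dist (γ t) (γ s) < δ := by
      apply hη t ht s hs
      rw [Real.dist_eq, abs_of_nonneg (by linarith)]
      linarith
    have h2 : dist (G (γ t)) (G (γ s)) ≤ L * dist (γ t) (γ s) :=
      hLip _ (mem_image_of_mem γ ht) _ (mem_image_of_mem γ hs) hd
    have h4 : (0:ℝ) ≤ ∫ u in s..t, ‖deriv γ u‖ :=
      intervalIntegral.integral_nonneg hst (fun u _ => norm_nonneg _)
    have h5 : ∫ u in s..t, h u = Cst * ∫ u in s..t, ‖deriv γ u‖ := by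
      rw [hh, ← intervalIntegral.integral_const_mul]
    have h6 : ‖γ t - γ s‖ ≤ ∫ u in s..t, ‖deriv γ u‖ := hγnorm s t hs ht hst
    have h7 : dist (γ t) (γ s) = ‖γ t - γ s‖ := dist_eq_norm _ _
    have h8 : ‖G (γ t) - G (γ s)‖ = dist (G (γ t)) (G (γ s)) := (dist_eq_norm _ _).symm
    have hLC : L ≤ Cst := by rw [hCst]; nlinarith
    rw [h8, h5]
    calc dist (G (γ t)) (G (γ s)) ≤ L * dist (γ t) (γ s) := h2
      _ ≤ L * ∫ u in s..t, ‖deriv γ u‖ := by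
          rw [h7]; exact mul_le_mul_of_nonneg_left h6 hL0
      _ ≤ Cst * ∫ u in s..t, ‖deriv γ u‖ := mul_le_mul_of_nonneg_right hLC h4
  -- modulus at all scales via chaining
  have hmod : ∀ s t : ℝ, s ∈ Icc (0:ℝ) 1 → t ∈ Icc (0:ℝ) 1 → s ≤ t →
      ‖G (γ t) - G (γ s)‖ ≤ ∫ u in s..t, h u := by
    intro s t hs ht hst
    obtain ⟨n, hn⟩ := exists_nat_gt ((t - s) / η)
    have hn0 : 0 < (n:ℝ) := lt_of_le_of_lt (div_nonneg (by linarith) hηpos.le) hn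
    set d : ℝ := (t - s) / n with hd
    have hd0 : 0 ≤ d := div_nonneg (by linarith) hn0.le
    have hdlt : d < η := by
      rw [hd, div_lt_iff₀ hn0]
      have := (div_lt_iff₀ hηpos).1 hn
      nlinarith
    set u : ℕ → ℝ := fun k => s + k * d with hu
    have hu0 : u 0 = s := by simp [hu]
    have hun : u n = t := by
      rw [hu]
      show s + (n:ℝ) * d = t
      rw [hd, mul_div_cancel₀ (t - s) hn0.ne']; ring
    have humem : ∀ k, k ≤ n → u k ∈ Icc (0:ℝ) 1 := by
      intro k hk
      have h1 : (k:ℝ) * d ≤ n * d := by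
        apply mul_le_mul_of_nonneg_right _ hd0
        exact_mod_cast hk
      have h2 : (n:ℝ) * d = t - s := by
        rw [hd]; field_simp
      constructor
      · have h3 : (0:ℝ) ≤ (k:ℝ) * d := by positivity
        simp only [hu]; linarith [hs.1]
      · simp only [hu]; rw [h2] at h1; linarith [ht.2]
    have hstep : ∀ k : ℕ, u (k+1) - u k = d := by
      intro k; simp only [hu]; push_cast; ring
    have hmono : ∀ k : ℕ, u k ≤ u (k+1) := fun k => by
      have := hstep k; linarith
    have hksum : ∑ k ∈ Finset.range n, ∫ x in u k..u (k+1), h x = ∫ x in s..t, h x := by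
      conv_rhs => rw [← hu0, ← hun]
      apply intervalIntegral.sum_integral_adjacent_intervals
      intro k hk
      exact hhII _ _ (humem k (le_of_lt hk)) (humem (k+1) hk)
    calc ‖G (γ t) - G (γ s)‖
        = ‖∑ k ∈ Finset.range n, (G (γ (u (k+1))) - G (γ (u k)))‖ := by
          rw [Finset.sum_range_sub (fun k => G (γ (u k))), hu0, hun]
      _ ≤ ∑ k ∈ Finset.range n, ‖G (γ (u (k+1))) - G (γ (u k))‖ := norm_sum_le _ _
      _ ≤ ∑ k ∈ Finset.range n, ∫ x in u k..u (k+1), h x := by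
          apply Finset.sum_le_sum
          intro k hk
          apply hsmall _ _ (humem k (Finset.mem_range.1 hk).le)
            (humem (k+1) (Finset.mem_range.1 hk)) (hmono k)
          rw [hstep k]; exact hdlt
      _ = ∫ x in s..t, h x := hksum
  -- the vector-valued integrand
  set X : ℝ → (Fin m → ℝ) := fun t => mulv (V t) (deriv γ t) with hX
  have hXmeas : Measurable X := by
    apply measurable_pi_lambda
    intro i
    apply Finset.measurable_sum
    intro j _
    exact ((measurable_pi_apply j).comp ((measurable_pi_apply i).comp hVmeas)).mul
      ((measurable_pi_apply j).comp (measurable_deriv γ))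
  have hXbound : ∀ t ∈ Icc (0:ℝ) 1, ‖X t‖ ≤ (C * p) * ‖deriv γ t‖ := by
    intro t ht
    rw [hX]
    apply pi_norm_le_iff_of_nonneg (by positivity) |>.2
    intro i
    calc ‖mulv (V t) (deriv γ t) i‖ = |∑ j, V t i j * deriv γ t j| := by
          rw [Real.norm_eq_abs]; rfl
      _ ≤ ∑ j, |V t i j * deriv γ t j| := Finset.abs_sum_le_sum_abs _ _
      _ ≤ ∑ _j : Fin p, C * ‖deriv γ t‖ := by
          apply Finset.sum_le_sum
          intro j _
          rw [abs_mul]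
          apply mul_le_mul (hVb t ht i j) _ (abs_nonneg _) hC0
          rw [← Real.norm_eq_abs]
          exact norm_le_pi_norm (deriv γ t) j
      _ = (C * p) * ‖deriv γ t‖ := by
          rw [Finset.sum_const, Finset.card_univ, Fintype.card_fin]
          simp [mul_assoc, mul_comm, mul_left_comm]
  have hXint : IntegrableOn X (Icc (0:ℝ) 1) volume := by
    apply Integrable.mono' (hnormIcc.const_mul (C * p))
      hXmeas.aestronglyMeasurable.restrict
    rw [ae_restrict_iff' measurableSet_Icc]
    exact ae_of_all _ hXbound
  have hXII : IntervalIntegrable X volume 0 1 := by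
    apply IntegrableOn.intervalIntegrable
    rwa [uIcc_of_le (by norm_num : (0:ℝ) ≤ 1)]
  -- conclusion, componentwise
  funext i
  have hcomp : (∫ t in (0:ℝ)..1, X t) i = ∫ t in (0:ℝ)..1, X t i :=
    ((ContinuousLinearMap.proj (R := ℝ) (φ := fun _ : Fin m => ℝ) i).intervalIntegral_comp_comm
      hXII).symm
  show (∫ t in (0:ℝ)..1, X t) i = 0
  rw [hcomp]
  set w : ℝ → ℝ := fun t => X t i with hw
  set g : ℝ → ℝ := fun t => G (γ t) i with hg
  have hwint : IntegrableOn w (Icc (0:ℝ) 1) volume :=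
    (ContinuousLinearMap.proj (R := ℝ) (φ := fun _ : Fin m => ℝ) i).integrable_comp hXint
  have hwIoo : IntegrableOn w (Ioo (0:ℝ) 1) volume := hwint.mono_set Ioo_subset_Icc_self
  set c : ℝ → ℝ := fun t => max 0 (min 1 t) with hc
  have hcmem : ∀ t, c t ∈ Icc (0:ℝ) 1 :=
    fun t => ⟨le_max_left _ _, max_le (by norm_num) (min_le_left _ _)⟩
  have hcmono : Monotone c := fun a b hab =>
    max_le_max le_rfl (min_le_min le_rfl hab)
  have hceq : ∀ t ∈ Ioo (0:ℝ) 1, c t = t := by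
    intro t ht
    rw [hc]
    simp only
    rw [min_eq_right ht.2.le, max_eq_right ht.1.le]
  have hccont : Continuous c := continuous_const.max (continuous_const.min continuous_id)
  set mprim : ℝ → ℝ := fun t => ∫ s in (0:ℝ)..t, hind s with hmprim
  have hmincr : ∀ a b : ℝ, mprim b - mprim a = ∫ u in a..b, hind u := by
    intro a b
    rw [hmprim]
    exact intervalIntegral.integral_interval_sub_left hindint.intervalIntegrable
      hindint.intervalIntegrable
  have hmcont : Continuous mprim :=
    intervalIntegral.continuous_primitive (fun a b => hindint.intervalIntegrable) 0
  -- g ∘ c is continuous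
  have hgccont : Continuous (fun t => g (c t)) := by
    have h1 : Continuous (fun t => γ (c t)) := hγcont.comp_continuous hccont hcmem
    exact (continuous_apply i).comp (hG.continuous.comp h1)
  -- key increment bound for g ∘ c
  have hgcincr : ∀ a b : ℝ, a ≤ b → |g (c b) - g (c a)| ≤ ∫ u in a..b, hind u := by
    intro a b hab
    have hca := hcmem a
    have hcb := hcmem b
    have hcab : c a ≤ c b := hcmono hab
    have h1 : |g (c b) - g (c a)| ≤ ‖G (γ (c b)) - G (γ (c a))‖ := by
      have he : g (c b) - g (c a) = (G (γ (c b)) - G (γ (c a))) i := by simp [hg]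
      rw [he, ← Real.norm_eq_abs]
      exact norm_le_pi_norm _ i
    have h2 : ‖G (γ (c b)) - G (γ (c a))‖ ≤ ∫ u in (c a)..(c b), h u :=
      hmod _ _ hca hcb hcab
    have h3 : ∫ u in (c a)..(c b), h u = ∫ u in (c a)..(c b), hind u := by
      apply intervalIntegral.integral_congr
      intro x hx
      rw [uIcc_of_le hcab] at hx
      rw [hhind, indicator_of_mem (Icc_subset_Icc hca.1 hcb.2 hx)]
    have h4 : ∫ u in (c a)..(c b), hind u ≤ ∫ u in a..b, hind u := by
      rcases eq_or_lt_of_le hcab with heq | hlt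
      · rw [heq, intervalIntegral.integral_same]
        exact intervalIntegral.integral_nonneg hab (fun x _ => hindnonneg x)
      · have hac : a ≤ c a := by
          rcases le_or_gt a 1 with h6 | h6
          · rw [hc]; simp only; rw [min_eq_right h6]; exact le_max_right _ _
          · exfalso
            have h7 : c a = 1 := by
              rw [hc]; simp only; rw [min_eq_left h6.le]; norm_num
            rw [h7] at hlt
            exact absurd hcb.2 (not_le.2 hlt)
        have hcbb : c b ≤ b := by
          rcases le_or_gt (min 1 b) 0 with h6 | h6
          · exfalso
            have h7 : c b ≤ 0 := by rw [hc]; simp only; exact max_le le_rfl h6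
            have h8 : 0 < c b := lt_of_le_of_lt hca.1 hlt
            linarith
          · have h7 : c b = min 1 b := by
              rw [hc]; simp only; exact max_eq_right h6.le
            rw [h7]; exact min_le_right _ _
        exact intervalIntegral.integral_mono_interval hac hcab hcbb
          (ae_of_all _ hindnonneg) hindint.intervalIntegrable
    linarith
  have hgc1 : c 1 = 1 := by rw [hc]; norm_num
  have hgc0 : c 0 = 0 := by rw [hc]; norm_num
  have hgloop : g 1 = g 0 := by rw [hg]; simp only; rw [hloop]
  -- a.e. derivative of the combined functions
  have haede : ∀ σ : ℝ, ∀ᵐ t ∂(volume.restrict (Ioo (0:ℝ) 1)),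
      HasDerivAt (fun s => mprim s + σ * g (c s)) (hind t + σ * w t) t := by
    intro σ
    filter_upwards [ae_restrict_of_ae (ae_hasDerivAt_primitive hindint),
      ae_restrict_of_ae_restrict_of_subset Ioo_subset_Icc_self
        (hchain γ ⟨hdiff, hint, hrep⟩),
      ae_restrict_mem measurableSet_Ioo] with t hm' hc' ht
    have hFd : HasDerivAt (fun s => G (γ s)) (X t) t :=
      hc' (V t) (hVsel t (Ioo_subset_Icc_self ht))
    have hgd : HasDerivAt (fun s => G (γ s) i) (w t) t := hasDerivAt_pi.1 hFd i
    have hgcd : HasDerivAt (fun s => g (c s)) (w t) t := by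
      have hev : (fun s => g (c s)) =ᶠ[nhds t] (fun s => G (γ s) i) := by
        filter_upwards [isOpen_Ioo.mem_nhds ht] with s hs
        rw [hg]; simp only; rw [hceq s hs]
      exact (Filter.EventuallyEq.hasDerivAt_iff hev).2 hgd
    exact hm'.add (hgcd.const_mul σ)
  -- monotonicity
  have hmonot : ∀ σ : ℝ, |σ| = 1 → Monotone (fun s => mprim s + σ * g (c s)) := by
    intro σ hσ a b hab
    simp only
    have h2 : mprim b - mprim a = ∫ u in a..b, hind u := hmincr a b
    have h4 : |σ * g (c b) - σ * g (c a)| ≤ ∫ u in a..b, hind u := by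
      rw [← mul_sub, abs_mul, hσ, one_mul]
      exact hgcincr a b hab
    obtain ⟨h5, h6⟩ := abs_le.1 h4
    linarith
  have hm1 : mprim 1 = ∫ t in Ioo (0:ℝ) 1, hind t := by
    rw [hmprim]
    simp only
    rw [intervalIntegral.integral_of_le (by norm_num : (0:ℝ) ≤ 1),
      integral_Ioc_eq_integral_Ioo]
  have hm0 : mprim 0 = 0 := intervalIntegral.integral_same
  have hindIoo : IntegrableOn hind (Ioo (0:ℝ) 1) volume := hindint.integrableOn
  have key : ∀ σ : ℝ, |σ| = 1 → σ * ∫ t in Ioo (0:ℝ) 1, w t ≤ 0 := by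
    intro σ hσ
    have hcont : Continuous (fun s => mprim s + σ * g (c s)) :=
      hmcont.add (continuous_const.mul hgccont)
    have hle := monotone_setIntegral_deriv_le (hmonot σ hσ) hcont (haede σ)
    have hadd : ∫ t in Ioo (0:ℝ) 1, (hind t + σ * w t) =
        (∫ t in Ioo (0:ℝ) 1, hind t) + σ * ∫ t in Ioo (0:ℝ) 1, w t := by
      rw [MeasureTheory.integral_add hindIoo (hwIoo.const_mul σ),
        MeasureTheory.integral_const_mul]
    have hrhs : (fun s => mprim s + σ * g (c s)) 1 - (fun s => mprim s + σ * g (c s)) 0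
        = ∫ t in Ioo (0:ℝ) 1, hind t := by
      simp only
      rw [hgc1, hgc0, hgloop, hm0, hm1]; ring
    rw [hadd, hrhs] at hle
    linarith
  have hzero : ∫ t in Ioo (0:ℝ) 1, w t = 0 := by
    have k1 := key 1 (by norm_num)
    have k2 := key (-1) (by norm_num)
    rw [one_mul] at k1
    linarith
  rw [intervalIntegral.integral_of_le (by norm_num : (0:ℝ) ≤ 1),
    integral_Ioc_eq_integral_Ioo]
  exact hzero
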